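/- In PD(L): the LTS PD(L) is bisimilar to L; every trace leading to a pre-divergent state of PD(L) belongs to anT(L); and no trace leading to a post-divergent state of PD(L) belongs to anT(L). -/

import Mathlib

/-- A labelled transition system with state type `S` and visible-action type `A`.
`none` plays the role of the invisible action τ. -/
structure LTS (S : Type*) (A : Type*) where
  alpha : Set A
  init : S
  tr : S → Option A → S → Prop
  wf : ∀ s a s', tr s (some a) s' → a ∈ alpha

namespace LTS

variable {S S₁ S₂ S₃ A : Type*}

/-- `Steps L s σ t`: a finite path from `s` to `t` whose visible labels spell `σ`,
with τ-transitions interleaved freely (this is `s ⇒^σ t`). -/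
inductive Steps (L : LTS S A) : S → List A → S → Prop
  | refl (s : S) : Steps L s [] s
  | tau {s s' t : S} {σ : List A} : L.tr s none s' → Steps L s' σ t → Steps L s σ t
  | vis {s s' t : S} {a : A} {σ : List A} :
      L.tr s (some a) s' → Steps L s' σ t → Steps L s (a :: σ) t

/-- Traces. -/
def Tr (L : LTS S A) : Set (List A) := { σ | ∃ s, L.Steps L.init σ s }

/-- A state admits an infinite path consisting solely of τ-transitions. -/
def DivergesFrom (L : LTS S A) (s : S) : Prop :=
  ∃ f : ℕ → S, f 0 = s ∧ ∀ n, L.tr (f n) none (f (n + 1))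

/-- Divergence traces. -/
def Div (L : LTS S A) : Set (List A) :=
  { σ | ∃ s, L.Steps L.init σ s ∧ L.DivergesFrom s }

/-- `s` refuses every action in `X ∪ {τ}`. -/
def Refuses (L : LTS S A) (s : S) (X : Set A) : Prop :=
  (∀ s', ¬ L.tr s none s') ∧ ∀ a ∈ X, ∀ s', ¬ L.tr s (some a) s'

/-- Stable failures. -/
def Sf (L : LTS S A) : Set (List A × Set A) :=
  { p | ∃ s, L.Steps L.init p.1 s ∧ L.Refuses s p.2 }

/-- Traces of stable failures: `Sf^Tr(L) = { σ | (σ, ∅) ∈ Sf(L) }`. -/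
def SfTr (L : LTS S A) : Set (List A) := { σ | (σ, (∅ : Set A)) ∈ L.Sf }

/-- The length-`n` prefix of an infinite word. -/
def pref (ξ : ℕ → A) (n : ℕ) : List A := (List.range n).map ξ

/-- Infinite traces: infinite paths from the initial state spelling `ξ`. -/
def Inf (L : LTS S A) : Set (ℕ → A) :=
  { ξ | ∃ g : ℕ → S, g 0 = L.init ∧ ∀ n, L.Steps (g n) [ξ n] (g (n + 1)) }

/-- Bisimilarity `L₁ ≡ L₂`: equal alphabets and a bisimulation relating the
initial states. -/
def Bisimilar (L₁ : LTS S₁ A) (L₂ : LTS S₂ A) : Prop :=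
  L₁.alpha = L₂.alpha ∧
  ∃ R : S₁ → S₂ → Prop, R L₁.init L₂.init ∧
    ∀ s₁ s₂, R s₁ s₂ →
      (∀ a s₁', L₁.tr s₁ a s₁' → ∃ s₂', L₂.tr s₂ a s₂' ∧ R s₁' s₂') ∧
      (∀ a s₂', L₂.tr s₂ a s₂' → ∃ s₁', L₁.tr s₁ a s₁' ∧ R s₁' s₂')

/-- Parallel composition: synchronization on common visible actions,
interleaving on τ and on actions of only one alphabet. -/
def par (L₁ : LTS S₁ A) (L₂ : LTS S₂ A) : LTS (S₁ × S₂) A where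
  alpha := L₁.alpha ∪ L₂.alpha
  init := (L₁.init, L₂.init)
  tr := fun p a q =>
    match a with
    | none => (L₁.tr p.1 none q.1 ∧ q.2 = p.2) ∨ (L₂.tr p.2 none q.2 ∧ q.1 = p.1)
    | some b =>
        (b ∉ L₂.alpha ∧ L₁.tr p.1 (some b) q.1 ∧ q.2 = p.2) ∨
        (b ∉ L₁.alpha ∧ L₂.tr p.2 (some b) q.2 ∧ q.1 = p.1) ∨
        (b ∈ L₁.alpha ∧ b ∈ L₂.alpha ∧ L₁.tr p.1 (some b) q.1 ∧ L₂.tr p.2 (some b) q.2)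
  wf := by
    rintro s b s' (⟨-, h, -⟩ | ⟨-, h, -⟩ | ⟨h₁, h₂, -, -⟩)
    · exact Set.mem_union_left _ (L₁.wf _ _ _ h)
    · exact Set.mem_union_right _ (L₂.wf _ _ _ h)
    · exact Set.mem_union_left _ h₁

theorem mem_alpha_of_steps {L : LTS S A} {s t : S} {σ : List A}
    (h : L.Steps s σ t) : ∀ a ∈ σ, a ∈ L.alpha := by
  induction h with
  | refl => simp
  | tau _ _ ih => exact ih
  | vis htr _ ih =>
      intro a ha
      rcases List.mem_cons.mp ha with rfl | ha
      · exact L.wf _ _ _ htr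
      · exact ih a ha

/-- `S_σ`: the set of states reachable from the initial state via `σ`. -/
def Sset (L : LTS S A) (σ : List A) : Set S := { s | L.Steps L.init σ s }

/-- Determinization `Det(L)`, with states `S_σ`, transitions
`(S_σ, a, S_{σa})` for `σa ∈ Tr(L)`, and initial state `S_ε`. -/
def Det (L : LTS S A) : LTS (Set S) A where
  alpha := L.alpha
  init := L.Sset []
  tr := fun X b Y =>
    ∃ a σ, b = some a ∧ σ ++ [a] ∈ L.Tr ∧ X = L.Sset σ ∧ Y = L.Sset (σ ++ [a])
  wf := by
    rintro X b Y ⟨a, σ, hb, ⟨t, hsteps⟩, -, -⟩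
    obtain rfl : b = a := Option.some.inj hb
    exact mem_alpha_of_steps hsteps b (by simp)

/-- Unambiguation `Una(L) = L || Det(L)`. -/
def Una (L : LTS S A) : LTS (S × Set S) A := L.par L.Det

/-- Minimal divergence traces. -/
def minD (L : LTS S A) : Set (List A) :=
  { σ ∈ L.Div | ∀ i < σ.length, σ.take i ∉ L.Div }

/-- Finite extensions of minimal divergence traces (within `Σ(L)*`). -/
def extT (L : LTS S A) : Set (List A) :=
  { σ | (∀ a ∈ σ, a ∈ L.alpha) ∧ ∃ i ≤ σ.length, σ.take i ∈ L.minD }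

/-- Always-nondivergent traces. -/
def anT (L : LTS S A) : Set (List A) := L.Tr \ L.extT

/-- Infinite extensions of minimal divergence traces (within `Σ(L)^ω`). -/
def extI (L : LTS S A) : Set (ℕ → A) :=
  { ξ | (∀ i, ξ i ∈ L.alpha) ∧ ∃ i, pref ξ i ∈ L.minD }

/-- Always-nondivergent infinite traces. -/
def anI (L : LTS S A) : Set (ℕ → A) := L.Inf \ L.extI

/-- Eventually-always-nondivergent infinite traces. -/
def eanI (L : LTS S A) : Set (ℕ → A) :=
  { ξ ∈ L.Inf | ∃ n, ∀ i ≥ n, pref ξ i ∉ L.Div }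

/-- Always-eventually-nondivergent infinite traces. -/
def aenI (L : LTS S A) : Set (ℕ → A) :=
  { ξ ∈ L.Inf | ∀ n, ∃ i ≥ n, pref ξ i ∉ L.Div }

/-- Nondivergent failures. -/
def nF (L : LTS S A) : Set (List A × Set A) := { p ∈ L.Sf | p.1 ∉ L.Div }

/-- Strongly nondivergent failures. -/
def snF (L : LTS S A) : Set (List A × Set A) :=
  { p ∈ L.nF | ∀ a ∈ p.2, p.1 ++ [a] ∉ L.Div }

/-- Always nondivergent failures. -/
def anF (L : LTS S A) : Set (List A × Set A) := { p ∈ L.Sf | p.1 ∉ L.extT }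

/-- Strongly always nondivergent failures. -/
def sanF (L : LTS S A) : Set (List A × Set A) :=
  { p ∈ L.anF | ∀ a ∈ p.2, p.1 ++ [a] ∉ L.minD }

/-- `X^Tr = { σ | (σ, ∅) ∈ X }`. -/
def XTr (X : Set (List A × Set A)) : Set (List A) := { σ | (σ, (∅ : Set A)) ∈ X }

/-- Internal choice `L₁ ⊓ L₂`: a fresh initial state with a τ-transition to
(a disjoint copy of) each of `L₁` and `L₂`. -/
def ichoice (L₁ : LTS S₁ A) (L₂ : LTS S₂ A) : LTS (Option (S₁ ⊕ S₂)) A where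
  alpha := L₁.alpha ∪ L₂.alpha
  init := none
  tr := fun s a t =>
    (s = none ∧ a = none ∧
      (t = some (Sum.inl L₁.init) ∨ t = some (Sum.inr L₂.init))) ∨
    (∃ s₁ t₁, s = some (Sum.inl s₁) ∧ t = some (Sum.inl t₁) ∧ L₁.tr s₁ a t₁) ∨
    (∃ s₂ t₂, s = some (Sum.inr s₂) ∧ t = some (Sum.inr t₂) ∧ L₂.tr s₂ a t₂)
  wf := by
    rintro s a t (⟨-, h, -⟩ | ⟨s₁, t₁, -, -, h⟩ | ⟨s₂, t₂, -, -, h⟩)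
    · simp at h
    · exact Set.mem_union_left _ (L₁.wf _ _ _ h)
    · exact Set.mem_union_right _ (L₂.wf _ _ _ h)

/-- The livelock LTS `LL`: one state, empty alphabet, a single τ-loop. -/
def LL (A : Type*) : LTS Unit A where
  alpha := ∅
  init := ()
  tr := fun _ a _ => a = none
  wf := by rintro _ _ _ h; simp at h

/-- Reachability from the initial state. -/
def Reachable (L : LTS S A) (s : S) : Prop := ∃ σ, L.Steps L.init σ s

/-- The reachable part of an LTS. -/
def reachPart (L : LTS S A) : LTS {s : S // L.Reachable s} A where
  alpha := L.alpha
  init := ⟨L.init, ⟨[], Steps.refl _⟩⟩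
  tr := fun s a t => L.tr s.1 a t.1
  wf := fun _ a _ h => L.wf _ _ _ h

/-- `σ_a`: extend a trace by a label (`τ` contributes nothing). -/
def extw (σ : List A) (a : Option A) : List A :=
  match a with
  | none => σ
  | some b => σ ++ [b]

open scoped Classical in
/-- `[σ] = pre` (i.e. `true`) iff `σ ∈ anT(L)`. -/
noncomputable def tag (L : LTS S A) (σ : List A) : Bool := decide (σ ∈ L.anT)

/-- `PD(L)`: `Una(L)` augmented with a bit remembering whether the executed
trace is still always-nondivergent (`true` = pre-divergent). -/
noncomputable def PD (L : LTS S A) : LTS ((S × Set S) × Bool) A where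
  alpha := L.alpha
  init := (L.Una.init, L.tag [])
  tr := fun p a q =>
    ∃ σ, L.Una.Steps L.Una.init σ p.1 ∧ p.2 = L.tag σ ∧
      q.2 = L.tag (extw σ a) ∧ L.Una.tr p.1 a q.1
  wf := by
    rintro p a q ⟨σ, -, -, -, h⟩
    have h' := L.Una.wf _ _ _ h
    rcases h' with h' | h' <;> exact h'

/-! ### Auxiliary lemmas -/

theorem Steps.append' {L : LTS S A} {s t u : S} {σ ρ : List A}
    (h1 : L.Steps s σ t) (h2 : L.Steps t ρ u) : L.Steps s (σ ++ ρ) u := by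
  induction h1 with
  | refl => simpa using h2
  | tau htr _ ih => exact .tau htr (ih h2)
  | vis htr _ ih => exact .vis htr (ih h2)

theorem steps_split {L : LTS S A} {s t : S} {ρ : List A}
    (h : L.Steps s ρ t) :
    ∀ σ₁ σ₂, ρ = σ₁ ++ σ₂ → ∃ u, L.Steps s σ₁ u ∧ L.Steps u σ₂ t := by
  induction h with
  | refl s =>
      rintro σ₁ σ₂ he
      obtain ⟨rfl, rfl⟩ := List.append_eq_nil_iff.mp he.symm
      exact ⟨s, .refl s, .refl s⟩
  | tau htr _ ih =>
      rintro σ₁ σ₂ rfl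
      obtain ⟨u, h1, h2⟩ := ih σ₁ σ₂ rfl
      exact ⟨u, .tau htr h1, h2⟩
  | @vis s s' t a σ htr hst ih =>
      rintro σ₁ σ₂ he
      cases σ₁ with
      | nil =>
          rw [List.nil_append] at he
          exact ⟨s, .refl s, he ▸ Steps.vis htr hst⟩
      | cons b σ₁' =>
          rw [List.cons_append] at he
          injection he with he1 he2
          subst he1
          obtain ⟨u, h1, h2⟩ := ih σ₁' σ₂ he2
          exact ⟨u, .vis htr h1, h2⟩

theorem det_no_tau {L : LTS S A} {X Y : Set S} (h : L.Det.tr X none Y) : False := by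
  obtain ⟨a, σ, h, -⟩ := h
  cases h

theorem una_tr_none {L : LTS S A} {p q : S × Set S}
    (h : L.Una.tr p none q) : L.tr p.1 none q.1 ∧ q.2 = p.2 := by
  rcases h with ⟨h, he⟩ | ⟨h, -⟩
  · exact ⟨h, he⟩
  · exact absurd h det_no_tau

theorem det_tr_alpha {L : LTS S A} {X Y : Set S} {b : A}
    (h : L.Det.tr X (some b) Y) : b ∈ L.alpha :=
  L.Det.wf _ _ _ h

theorem una_tr_some {L : LTS S A} {p q : S × Set S} {b : A}
    (h : L.Una.tr p (some b) q) :
    L.tr p.1 (some b) q.1 ∧ L.Det.tr p.2 (some b) q.2 := by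
  rcases h with ⟨hna, h, -⟩ | ⟨hna, h, -⟩ | ⟨-, -, h1, h2⟩
  · exact absurd (L.wf _ _ _ h) hna
  · exact absurd (det_tr_alpha h) hna
  · exact ⟨h1, h2⟩

theorem sset_append {L : LTS S A} (σ : List A) (b : A) :
    L.Sset (σ ++ [b]) = { t | ∃ u ∈ L.Sset σ, L.Steps u [b] t } := by
  ext t
  constructor
  · intro h
    obtain ⟨u, h1, h2⟩ := steps_split h σ [b] rfl
    exact ⟨u, h1, h2⟩
  · rintro ⟨u, h1, h2⟩
    exact Steps.append' h1 h2

theorem tr_iff_sset {L : LTS S A} {σ : List A} : σ ∈ L.Tr ↔ ∃ s, s ∈ L.Sset σ := Iff.rfl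

theorem div_iff_sset {L : LTS S A} {σ : List A} :
    σ ∈ L.Div ↔ ∃ s ∈ L.Sset σ, L.DivergesFrom s := Iff.rfl

theorem tr_prefix {L : LTS S A} {σ : List A} {b : A} (h : σ ++ [b] ∈ L.Tr) : σ ∈ L.Tr := by
  obtain ⟨s, hs⟩ := h
  obtain ⟨u, h1, -⟩ := steps_split hs σ [b] rfl
  exact ⟨u, h1⟩

theorem minD_sub_div {L : LTS S A} : L.minD ⊆ L.Div := fun _ h => h.1

theorem anT_no_div_prefix {L : LTS S A} {σ : List A} (h : σ ∈ L.anT) :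
    ∀ i, σ.take i ∉ L.Div := by
  by_contra hc
  push_neg at hc
  classical
  have hex : ∃ j, σ.take j ∈ L.Div := hc
  have hjd : σ.take (Nat.find hex) ∈ L.Div := Nat.find_spec hex
  have hmin : ∀ k, k < Nat.find hex → σ.take k ∉ L.Div := fun k hk => Nat.find_min hex hk
  obtain ⟨s0, hs0⟩ := h.1
  rcases le_or_gt (Nat.find hex) σ.length with hle | hlt
  · refine h.2 ⟨mem_alpha_of_steps hs0, Nat.find hex, hle, hjd, ?_⟩
    intro k hk
    rw [List.length_take, min_eq_left hle] at hk
    rw [List.take_take, min_eq_left hk.le]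
    exact hmin k hk
  · have hσd : σ ∈ L.Div := by
      rw [← List.take_of_length_le hlt.le]; exact hjd
    refine h.2 ⟨mem_alpha_of_steps hs0, σ.length, le_refl _, ?_⟩
    rw [List.take_length]
    refine ⟨hσd, fun k hk => hmin k (hk.trans hlt)⟩

theorem not_anT_snoc {L : LTS S A} {σ : List A} {b : A} (h : σ ∉ L.anT) :
    σ ++ [b] ∉ L.anT := by
  rintro ⟨htr, hext⟩
  refine h ⟨tr_prefix htr, ?_⟩
  rintro ⟨hal, i, hile, hmind⟩
  refine hext ⟨?_, i, ?_, ?_⟩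
  · obtain ⟨s, hs⟩ := htr
    exact mem_alpha_of_steps hs
  · rw [List.length_append]; omega
  · rwa [List.take_append_of_le_length hile]

theorem anT_snoc_iff {L : LTS S A} {σ : List A} {b : A} (h : σ ∈ L.anT) :
    σ ++ [b] ∈ L.anT ↔ (σ ++ [b] ∈ L.Tr ∧ σ ++ [b] ∉ L.Div) := by
  constructor
  · intro h2
    refine ⟨h2.1, ?_⟩
    have := anT_no_div_prefix h2 (σ ++ [b]).length
    rwa [List.take_length] at this
  · rintro ⟨htr, hnd⟩
    refine ⟨htr, ?_⟩
    rintro ⟨hal, i, hile, hmind⟩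
    rw [List.length_append, List.length_singleton] at hile
    rcases lt_or_ge i (σ.length + 1) with hlt | hge
    · have hile' : i ≤ σ.length := by omega
      rw [List.take_append_of_le_length hile'] at hmind
      exact anT_no_div_prefix h i (minD_sub_div hmind)
    · have : i = σ.length + 1 := le_antisymm hile hge
      rw [this] at hmind
      have : (σ ++ [b]).take (σ.length + 1) = σ ++ [b] := by
        apply List.take_of_length_le
        simp
      rw [this] at hmind
      exact hnd (minD_sub_div hmind)

theorem sset_snoc_congr {L : LTS S A} {σ σ' : List A} (hS : L.Sset σ = L.Sset σ') (b : A) :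
    L.Sset (σ ++ [b]) = L.Sset (σ' ++ [b]) := by
  rw [sset_append, sset_append, hS]

theorem tag_snoc_eq {L : LTS S A} {σ σ' : List A} (b : A)
    (hS : L.Sset σ = L.Sset σ') (ht : L.tag σ = L.tag σ') :
    L.tag (σ ++ [b]) = L.tag (σ' ++ [b]) := by
  unfold tag at ht ⊢
  rw [decide_eq_decide] at ht ⊢
  by_cases hσ : σ ∈ L.anT
  · have hσ' : σ' ∈ L.anT := ht.mp hσ
    rw [anT_snoc_iff hσ, anT_snoc_iff hσ']
    have hSb := sset_snoc_congr hS b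
    rw [tr_iff_sset, tr_iff_sset, div_iff_sset, div_iff_sset, hSb]
  · have hσ' : σ' ∉ L.anT := fun hh => hσ (ht.mpr hh)
    simp only [iff_iff_implies_and_implies]
    constructor
    · intro hh; exact absurd hh (not_anT_snoc hσ)
    · intro hh; exact absurd hh (not_anT_snoc hσ')

theorem una_steps_inv_aux {L : LTS S A} {p q : S × Set S} {σ : List A}
    (h : L.Una.Steps p σ q) :
    ∀ ρ, p.2 = L.Sset ρ → L.Steps L.init ρ p.1 →
      q.2 = L.Sset (ρ ++ σ) ∧ L.Steps L.init (ρ ++ σ) q.1 := by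
  induction h with
  | refl s => intro ρ h1 h2; simpa using ⟨h1, h2⟩
  | @tau s s' t σ htr _ ih =>
      intro ρ h1 h2
      obtain ⟨htr', he⟩ := una_tr_none htr
      refine ih ρ (he.trans h1) ?_
      have := Steps.append' h2 (Steps.tau htr' (.refl _))
      simpa using this
  | @vis s s' t b σ htr _ ih =>
      intro ρ h1 h2
      obtain ⟨htr', hdet⟩ := una_tr_some htr
      obtain ⟨a, σ₀, ha, htr0, hX, hY⟩ := hdet
      obtain rfl : b = a := Option.some.inj ha
      have hY' : s'.2 = L.Sset (ρ ++ [b]) := by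
        rw [hY]
        exact sset_snoc_congr (hX.symm.trans h1) b
      have h2' : L.Steps L.init (ρ ++ [b]) s'.1 :=
        Steps.append' h2 (Steps.vis htr' (.refl _))
      have := ih (ρ ++ [b]) hY' h2'
      simpa using this

theorem una_steps_inv {L : LTS S A} {σ : List A} {p : S × Set S}
    (h : L.Una.Steps L.Una.init σ p) :
    p.2 = L.Sset σ ∧ L.Steps L.init σ p.1 := by
  have := una_steps_inv_aux h [] rfl (.refl _)
  simpa using this

theorem pd_steps_inv_aux {L : LTS S A} {p q : (S × Set S) × Bool} {σ : List A}
    (h : L.PD.Steps p σ q) :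
    ∀ ρ, L.Una.Steps L.Una.init ρ p.1 → p.2 = L.tag ρ →
      L.Una.Steps L.Una.init (ρ ++ σ) q.1 ∧ q.2 = L.tag (ρ ++ σ) := by
  induction h with
  | refl s => intro ρ h1 h2; simpa using ⟨h1, h2⟩
  | @tau s s' t σ htr _ ih =>
      intro ρ h1 h2
      obtain ⟨σ', hs', hp2, hq2, htr'⟩ := htr
      have h1' : L.Una.Steps L.Una.init ρ s'.1 := by
        have := Steps.append' h1 (Steps.tau htr' (.refl _))
        simpa using this
      have h2' : s'.2 = L.tag ρ := by
        rw [hq2]; show L.tag σ' = L.tag ρ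
        rw [← hp2, h2]
      exact ih ρ h1' h2'
  | @vis s s' t b σ htr _ ih =>
      intro ρ h1 h2
      obtain ⟨σ', hs', hp2, hq2, htr'⟩ := htr
      have hSeq : L.Sset σ' = L.Sset ρ :=
        ((una_steps_inv hs').1.symm).trans (una_steps_inv h1).1
      have hteq : L.tag σ' = L.tag ρ := by rw [← hp2, h2]
      have h1' : L.Una.Steps L.Una.init (ρ ++ [b]) s'.1 :=
        Steps.append' h1 (Steps.vis htr' (.refl _))
      have h2' : s'.2 = L.tag (ρ ++ [b]) := by
        rw [hq2]
        exact tag_snoc_eq b hSeq hteq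
      have := ih (ρ ++ [b]) h1' h2'
      simpa using this

/-- `PD(L)` is bisimilar to `L`; every trace leading to a
pre-divergent state of `PD(L)` is in `anT(L)`, and no trace leading to a
post-divergent state is. -/
theorem pd_properties (L : LTS S A) :
    Bisimilar L.PD L ∧
    ∀ (p : (S × Set S) × Bool) (σ : List A),
      L.PD.Steps L.PD.init σ p →
        ((p.2 = true → σ ∈ L.anT) ∧ (p.2 = false → σ ∉ L.anT)) := by
  constructor
  · refine ⟨rfl, fun p s => ∃ σ, L.Una.Steps L.Una.init σ p.1 ∧ p.2 = L.tag σ ∧ p.1.1 = s,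
      ⟨[], .refl _, rfl, rfl⟩, ?_⟩
    rintro p s ⟨σ, hst, htag, hfst⟩
    constructor
    · rintro a q ⟨σ', hs', hp2, hq2, htr'⟩
      refine ⟨q.1.1, ?_, ⟨extw σ' a, ?_, hq2, rfl⟩⟩
      · subst hfst
        cases a with
        | none => exact (una_tr_none htr').1
        | some b => exact (una_tr_some htr').1
      · cases a with
        | none =>
            have := Steps.append' hs' (Steps.tau htr' (.refl _))
            simpa [extw] using this
        | some b =>
            exact Steps.append' hs' (Steps.vis htr' (.refl _))
    · intro a s' htr'
      subst hfst
      obtain ⟨hX, hLst⟩ := una_steps_inv hst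
      cases a with
      | none =>
          have hut : L.Una.tr p.1 none ((s', p.1.2) : S × Set S) := Or.inl ⟨htr', rfl⟩
          refine ⟨((s', p.1.2), p.2), ⟨σ, hst, htag, htag, hut⟩,
            ⟨σ, ?_, htag, rfl⟩⟩
          have := Steps.append' hst (Steps.tau hut (.refl _))
          simpa using this
      | some b =>
          have hmemTr : σ ++ [b] ∈ L.Tr :=
            ⟨s', Steps.append' hLst (Steps.vis htr' (.refl _))⟩
          have hdet : L.Det.tr p.1.2 (some b) (L.Sset (σ ++ [b])) :=
            ⟨b, σ, rfl, hmemTr, hX, rfl⟩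
          have hba : b ∈ L.alpha := L.wf _ _ _ htr'
          have huna : L.Una.tr p.1 (some b) (s', L.Sset (σ ++ [b])) :=
            Or.inr (Or.inr ⟨hba, hba, htr', hdet⟩)
          refine ⟨((s', L.Sset (σ ++ [b])), L.tag (σ ++ [b])),
            ⟨σ, hst, htag, rfl, huna⟩, ⟨σ ++ [b], ?_, rfl, rfl⟩⟩
          exact Steps.append' hst (Steps.vis huna (.refl _))
  · intro p σ h
    have := pd_steps_inv_aux h [] (.refl _) rfl
    simp only [List.nil_append] at this
    obtain ⟨-, htag⟩ := this
    constructor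
    · intro hb
      rw [hb] at htag
      simpa [tag] using htag.symm
    · intro hb
      rw [hb] at htag
      simpa [tag] using htag.symm

end LTS
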